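/- For an exchangeable probability measure on {0,1}^n, the properties ULC (the rank sequence is ultra-log-concave) and CAPU (every conditioned measure is antipodal pairs unimodal) are equivalent. -/

import Mathlib

open Finset

/-- Number of ones of `η ∈ {0,1}^n`. -/
def wt {n : ℕ} (η : Fin n → Bool) : ℕ := (univ.filter fun i => η i = true).card

/-- Total mass of the event that `η` agrees with `ξ` on the coordinates in `I`. -/
noncomputable def condZ {n : ℕ} (μ : (Fin n → Bool) → ℝ) (I : Finset (Fin n))
    (ξ : Fin n → Bool) : ℝ :=
  ∑ η ∈ univ.filter (fun η : Fin n → Bool => ∀ i ∈ I, η i = ξ i), μ η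

/-- Flip all coordinates outside `I`. -/
def flipOutside {n : ℕ} (I : Finset (Fin n)) (η : Fin n → Bool) : Fin n → Bool :=
  fun i => if i ∈ I then η i else !η i

/-- `γ_j` of the measure obtained from `μ` by conditioning on the values `ξ` of the
coordinates in `I`, regarded as a measure on the remaining `n - |I|` coordinates. -/
noncomputable def condGamma {n : ℕ} (μ : (Fin n → Bool) → ℝ) (I : Finset (Fin n))
    (ξ : Fin n → Bool) (j : ℕ) : ℝ :=
  (((n - I.card).choose j : ℝ))⁻¹ *
    ∑ η ∈ univ.filter (fun η : Fin n → Bool =>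
        (∀ i ∈ I, η i = ξ i) ∧ (univ.filter fun i => i ∉ I ∧ η i = true).card = j),
      (μ η / condZ μ I ξ) * (μ (flipOutside I η) / condZ μ I ξ)

/-- Rank sequence of `μ`. -/
noncomputable def rankSeq {n : ℕ} (μ : (Fin n → Bool) → ℝ) (i : ℕ) : ℝ :=
  ∑ η ∈ univ.filter (fun η : Fin n → Bool => wt η = i), μ η

/-- `(b 0, …, b n)` is unimodal. -/
def UnimodalOn (b : ℕ → ℝ) (n : ℕ) : Prop :=
  ∃ m ≤ n, (∀ i, i < m → b i ≤ b (i + 1)) ∧ (∀ i, m ≤ i → i < n → b (i + 1) ≤ b i)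


/-- outside-ones count as filter over the complement. -/
lemma out_eq_compl {n : ℕ} (I : Finset (Fin n)) (η : Fin n → Bool) :
    (univ.filter fun i => i ∉ I ∧ η i = true) = Iᶜ.filter fun i => η i = true := by
  ext i; simp [and_comm]

lemma card_S {n : ℕ} (I : Finset (Fin n)) (ξ : Fin n → Bool) (j : ℕ) :
    (univ.filter (fun η : Fin n → Bool =>
        (∀ i ∈ I, η i = ξ i) ∧ (univ.filter fun i => i ∉ I ∧ η i = true).card = j)).card
      = (n - I.card).choose j := by
  have hc : (Iᶜ : Finset (Fin n)).card = n - I.card := by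
    simp [card_compl]
  rw [← hc, ← Finset.card_powersetCard]
  refine Finset.card_bij' (fun η _ => Iᶜ.filter fun i => η i = true)
    (fun s _ => fun i => if i ∈ I then ξ i else decide (i ∈ s)) ?_ ?_ ?_ ?_
  · intro η hη
    simp only [mem_filter, mem_univ, true_and] at hη
    rw [Finset.mem_powersetCard]
    exact ⟨filter_subset _ _, by show (Iᶜ.filter fun i => η i = true).card = j; rw [← out_eq_compl]; exact hη.2⟩
  · intro s hs
    rw [Finset.mem_powersetCard] at hs
    simp only [mem_filter, mem_univ, true_and]
    constructor
    · intro i hi; simp [hi]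
    · rw [out_eq_compl]
      convert hs.2 using 2
      ext i
      simp only [mem_filter, mem_compl]
      constructor
      · rintro ⟨hiI, h2⟩
        simpa [hiI] using h2
      · intro hi
        have hiI : i ∉ I := fun h => (mem_compl.mp (hs.1 hi)) h
        simp [hiI, hi]
  · intro η hη
    simp only [mem_filter, mem_univ, true_and] at hη
    funext i
    by_cases hi : i ∈ I
    · simp [hi, hη.1 i hi]
    · simp [hi]
  · intro s hs
    rw [Finset.mem_powersetCard] at hs
    ext i
    simp only [mem_filter, mem_compl]
    constructor
    · rintro ⟨hiI, h2⟩; simpa [hiI] using h2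
    · intro hi
      have hiI : i ∉ I := fun h => (mem_compl.mp (hs.1 hi)) h
      simp [hiI, hi]

lemma wt_split {n : ℕ} (I : Finset (Fin n)) (ξ : Fin n → Bool) (η : Fin n → Bool)
    (h : ∀ i ∈ I, η i = ξ i) :
    wt η = (I.filter fun i => ξ i = true).card +
      (univ.filter fun i => i ∉ I ∧ η i = true).card := by
  rw [out_eq_compl]
  have h1 : (I.filter fun i => ξ i = true) = (univ.filter fun i => η i = true).filter (· ∈ I) := by
    ext i
    simp only [mem_filter, mem_univ, true_and]
    constructor
    · rintro ⟨hiI, hξ⟩; exact ⟨by rw [h i hiI]; exact hξ, hiI⟩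
    · rintro ⟨hη, hiI⟩; exact ⟨hiI, by rw [← h i hiI]; exact hη⟩
  have h2 : (Iᶜ.filter fun i => η i = true)
      = (univ.filter fun i => η i = true).filter (fun i => ¬ i ∈ I) := by
    ext i; simp only [mem_filter, mem_compl, mem_univ, true_and]; tauto
  rw [h1, h2, wt]
  exact (Finset.card_filter_add_card_filter_not (fun i => i ∈ I)).symm

lemma flip_agrees {n : ℕ} (I : Finset (Fin n)) (ξ η : Fin n → Bool)
    (h : ∀ i ∈ I, η i = ξ i) : ∀ i ∈ I, flipOutside I η i = ξ i := by
  intro i hi; simp [flipOutside, hi, h i hi]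

lemma flip_out {n : ℕ} (I : Finset (Fin n)) (η : Fin n → Bool) (j : ℕ)
    (hj : (univ.filter fun i => i ∉ I ∧ η i = true).card = j) :
    (univ.filter fun i => i ∉ I ∧ flipOutside I η i = true).card = (n - I.card) - j := by
  rw [out_eq_compl] at hj ⊢
  have h2 : (Iᶜ.filter fun i => flipOutside I η i = true)
      = Iᶜ.filter fun i => ¬ (η i = true) := by
    ext i
    simp only [mem_filter, mem_compl]
    simp only [flipOutside]
    constructor
    · rintro ⟨hiI, hf⟩
      refine ⟨hiI, ?_⟩
      rw [if_neg hiI] at hf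
      simp at hf; simp [hf]
    · rintro ⟨hiI, hf⟩
      refine ⟨hiI, ?_⟩
      rw [if_neg hiI]
      simp at hf ⊢; exact hf
  rw [h2]
  have := Finset.card_filter_add_card_filter_not (s := (Iᶜ : Finset (Fin n)))
    (fun i => η i = true)
  have hc : (Iᶜ : Finset (Fin n)).card = n - I.card := by simp [card_compl]
  omega

lemma card_wt {n : ℕ} (w : ℕ) :
    (univ.filter fun η : Fin n → Bool => wt η = w).card = n.choose w := by
  have := card_S (n := n) ∅ (fun _ => false) w
  simp only [Finset.card_empty, Nat.sub_zero] at this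
  rw [← this]
  congr 1
  apply Finset.filter_congr
  intro η _
  simp [wt]

lemma wt_le {n : ℕ} (η : Fin n → Bool) : wt η ≤ n := by
  have := Finset.card_filter_le (univ : Finset (Fin n)) (fun i => η i = true)
  simpa [wt] using this

lemma out_le {n : ℕ} (I : Finset (Fin n)) (η : Fin n → Bool) :
    (univ.filter fun i => i ∉ I ∧ η i = true).card ≤ n - I.card := by
  rw [out_eq_compl]
  calc (Iᶜ.filter fun i => η i = true).card ≤ Iᶜ.card := Finset.card_filter_le _ _
    _ = n - I.card := by simp [card_compl]

lemma sum_S_eq {n : ℕ} (I : Finset (Fin n)) (ξ : Fin n → Bool) (j : ℕ)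
    (f : (Fin n → Bool) → ℝ) (c : ℝ)
    (hf : ∀ η, (∀ i ∈ I, η i = ξ i) →
      (univ.filter fun i => i ∉ I ∧ η i = true).card = j → f η = c) :
    ∑ η ∈ univ.filter (fun η : Fin n → Bool =>
        (∀ i ∈ I, η i = ξ i) ∧ (univ.filter fun i => i ∉ I ∧ η i = true).card = j),
      f η = ((n - I.card).choose j : ℝ) * c := by
  rw [Finset.sum_congr rfl (fun η hη => by
    simp only [mem_filter, mem_univ, true_and] at hη
    exact hf η hη.1 hη.2), Finset.sum_const, card_S, nsmul_eq_mul]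

lemma condZ_eq {n : ℕ} (μ : (Fin n → Bool) → ℝ) (I : Finset (Fin n)) (ξ : Fin n → Bool)
    (a : ℕ → ℝ) (ha : ∀ η, μ η = a (wt η)) :
    condZ μ I ξ = ∑ j ∈ Finset.range (n - I.card + 1),
      ((n - I.card).choose j : ℝ) * a ((I.filter fun i => ξ i = true).card + j) := by
  rw [condZ]
  rw [← Finset.sum_fiberwise_of_maps_to
    (g := fun η : Fin n → Bool => (univ.filter fun i => i ∉ I ∧ η i = true).card)
    (t := Finset.range (n - I.card + 1))
    (fun η _ => Finset.mem_range.mpr (Nat.lt_succ_of_le (out_le I η))) μ]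
  refine Finset.sum_congr rfl fun j _ => ?_
  rw [Finset.filter_filter]
  exact sum_S_eq I ξ j μ _ (fun η h1 h2 => by rw [ha, wt_split I ξ η h1, h2])

lemma condGamma_eq {n : ℕ} (μ : (Fin n → Bool) → ℝ) (I : Finset (Fin n)) (ξ : Fin n → Bool)
    (a : ℕ → ℝ) (ha : ∀ η, μ η = a (wt η)) (j : ℕ) (hj : j ≤ n - I.card) :
    condGamma μ I ξ j =
      a ((I.filter fun i => ξ i = true).card + j) *
        a ((I.filter fun i => ξ i = true).card + (n - I.card - j)) / (condZ μ I ξ) ^ 2 := by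
  set k := (I.filter fun i => ξ i = true).card
  set m := n - I.card
  set Z := condZ μ I ξ
  rw [condGamma]
  rw [sum_S_eq I ξ j _ ((a (k + j) / Z) * (a (k + (m - j)) / Z)) (fun η h1 h2 => by
    rw [ha, ha, wt_split I ξ η h1, h2,
      wt_split I ξ (flipOutside I η) (flip_agrees I ξ η h1), flip_out I η j h2])]
  have hC : ((m.choose j : ℝ)) ≠ 0 := by
    exact_mod_cast (Nat.choose_pos hj).ne'
  have hC' : (((n - I.card).choose j : ℝ)) ≠ 0 := hC
  field_simp

lemma step_lemma (a : ℕ → ℝ) (n : ℕ) (ha : ∀ w, 0 ≤ a w)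
    (hlc : ∀ i, 1 ≤ i → i ≤ n - 1 → a (i - 1) * a (i + 1) ≤ a i ^ 2)
    (hniz : ∀ i j m, i ≤ j → j ≤ m → m ≤ n → a i ≠ 0 → a m ≠ 0 → a j ≠ 0) :
    ∀ d u, u + d + 2 ≤ n → a u * a (u + d + 2) ≤ a (u + 1) * a (u + d + 1) := by
  intro d
  induction d with
  | zero =>
    intro u hu
    have := hlc (u + 1) (by omega) (by omega)
    simpa [pow_two] using this
  | succ d ih =>
    intro u hu
    have hlc2 : a (u + d + 1) * a (u + d + 3) ≤ a (u + d + 2) ^ 2 := by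
      have := hlc (u + d + 2) (by omega) (by omega)
      simpa using this
    by_cases hz : a (u + d + 2) = 0
    · have h0 : a u * a (u + d + 3) = 0 := by
        by_cases hau : a u = 0
        · simp [hau]
        · have : a (u + d + 3) = 0 := by
            by_contra hne
            exact (hniz u (u + d + 2) (u + d + 3) (by omega) (by omega) (by omega) hau hne) hz
          simp [this]
      calc a u * a (u + (d + 1) + 2) = 0 := by
            rw [show u + (d + 1) + 2 = u + d + 3 by omega]; exact h0
        _ ≤ a (u + 1) * a (u + (d + 1) + 1) := mul_nonneg (ha _) (ha _)
    · have hpos : 0 < a (u + d + 2) := lt_of_le_of_ne (ha _) (Ne.symm hz)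
      have key : (a u * a (u + d + 3)) * a (u + d + 2)
          ≤ (a (u + 1) * a (u + d + 2)) * a (u + d + 2) := by
        calc (a u * a (u + d + 3)) * a (u + d + 2)
            = (a u * a (u + d + 2)) * a (u + d + 3) := by ring
          _ ≤ (a (u + 1) * a (u + d + 1)) * a (u + d + 3) :=
              mul_le_mul_of_nonneg_right (ih u (by omega)) (ha _)
          _ = a (u + 1) * (a (u + d + 1) * a (u + d + 3)) := by ring
          _ ≤ a (u + 1) * a (u + d + 2) ^ 2 := mul_le_mul_of_nonneg_left hlc2 (ha _)
          _ = (a (u + 1) * a (u + d + 2)) * a (u + d + 2) := by ring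
      have := le_of_mul_le_mul_right key hpos
      calc a u * a (u + (d + 1) + 2) = a u * a (u + d + 3) := by ring_nf
        _ ≤ a (u + 1) * a (u + d + 2) := this
        _ = a (u + 1) * a (u + (d + 1) + 1) := by ring_nf

lemma mono_chain (b : ℕ → ℝ) (M : ℕ) (h : ∀ i, i < M → b i ≤ b (i + 1)) :
    ∀ t, t ≤ M → b 0 ≤ b t := by
  intro t
  induction t with
  | zero => intro _; exact le_refl _
  | succ t ih =>
    intro ht
    exact le_trans (ih (by omega)) (h t (by omega))

lemma anti_chain (b : ℕ → ℝ) (M n : ℕ) (h : ∀ i, M ≤ i → i < n → b (i + 1) ≤ b i) :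
    ∀ t, M ≤ t → t ≤ n → b n ≤ b t := by
  have key : ∀ d t, t + d = n → M ≤ t → b n ≤ b t := by
    intro d
    induction d with
    | zero => intro t ht _; exact le_of_eq (congrArg b (by omega : n = t))
    | succ d ih =>
      intro t ht hM
      exact le_trans (ih (t + 1) (by omega) (by omega)) (h t hM (by omega))
  intro t hM htn
  exact key (n - t) t (by omega) hM

lemma exists_window (n L k : ℕ) (hL : L ≤ n) (hk : k + L ≤ n) :
    ∃ (I : Finset (Fin n)) (ξ : Fin n → Bool),
      I.card = n - L ∧ (I.filter fun i => ξ i = true).card = k := by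
  refine ⟨Finset.attachFin (Finset.range (n - L))
      (fun m hm => lt_of_lt_of_le (Finset.mem_range.mp hm) (Nat.sub_le n L)),
    fun i => decide ((i : ℕ) < k), ?_, ?_⟩
  · rw [Finset.card_attachFin, Finset.card_range]
  · have : ((Finset.attachFin (Finset.range (n - L))
        (fun m hm => lt_of_lt_of_le (Finset.mem_range.mp hm) (Nat.sub_le n L))).filter
        fun i : Fin n => (decide ((i : ℕ) < k)) = true)
        = Finset.attachFin (Finset.range k) (fun m hm =>
            (by have := Finset.mem_range.mp hm; omega : m < n)) := by
      ext i
      simp only [Finset.mem_filter, Finset.mem_attachFin, Finset.mem_range,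
        decide_eq_true_eq]
      omega
    rw [this, Finset.card_attachFin, Finset.card_range]

lemma condZ_nonneg {n : ℕ} (μ : (Fin n → Bool) → ℝ) (hpos : ∀ η, 0 ≤ μ η)
    (I : Finset (Fin n)) (ξ : Fin n → Bool) : 0 ≤ condZ μ I ξ :=
  Finset.sum_nonneg fun η _ => hpos η

lemma main_core {n : ℕ} (μ : (Fin n → Bool) → ℝ) (a : ℕ → ℝ)
    (hpos : ∀ η, 0 ≤ μ η) (ha : ∀ η, μ η = a (wt η)) (hanonneg : ∀ w, 0 ≤ a w) :
    ((∀ i, 1 ≤ i → i ≤ n - 1 → a (i - 1) * a (i + 1) ≤ a i ^ 2) ∧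
      (∀ i j m, i ≤ j → j ≤ m → m ≤ n → a i ≠ 0 → a m ≠ 0 → a j ≠ 0)) ↔
    (∀ (I : Finset (Fin n)) (ξ : Fin n → Bool), 0 < condZ μ I ξ →
      UnimodalOn (condGamma μ I ξ) (n - I.card)) := by
  constructor
  · rintro ⟨hlc, hniz⟩ I ξ hZ
    set k := (I.filter fun i => ξ i = true).card with hk_def
    set m := n - I.card with hm_def
    have hIc : I.card ≤ n := by
      have := Finset.card_le_univ I
      simpa using this
    have hk_le : k ≤ I.card := Finset.card_filter_le _ _
    have hkm : k + m ≤ n := by omega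
    have hγ : ∀ j, j ≤ m → condGamma μ I ξ j
        = a (k + j) * a (k + (m - j)) / (condZ μ I ξ) ^ 2 := fun j hj =>
      condGamma_eq μ I ξ a ha j hj
    have hZ2 : (0:ℝ) < (condZ μ I ξ) ^ 2 := pow_pos hZ 2
    have hstep : ∀ j, 2 * j < m →
        a (k + j) * a (k + (m - j)) ≤ a (k + (j + 1)) * a (k + (m - (j + 1))) := by
      intro j hj
      by_cases h2 : 2 * j + 2 ≤ m
      · have := step_lemma a n hanonneg hlc hniz (m - 2 * j - 2) (k + j) (by omega)
        calc a (k + j) * a (k + (m - j))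
            = a (k + j) * a (k + j + (m - 2 * j - 2) + 2) := by
              rw [show k + j + (m - 2 * j - 2) + 2 = k + (m - j) by omega]
          _ ≤ a (k + j + 1) * a (k + j + (m - 2 * j - 2) + 1) := this
          _ = a (k + (j + 1)) * a (k + (m - (j + 1))) := by
              rw [show k + j + 1 = k + (j + 1) by omega,
                show k + j + (m - 2 * j - 2) + 1 = k + (m - (j + 1)) by omega]
      · have hodd : m = 2 * j + 1 := by omega
        rw [show m - j = j + 1 by omega, show m - (j + 1) = j by omega]
        exact le_of_eq (mul_comm _ _)
    refine ⟨(m + 1) / 2, by omega, ?_, ?_⟩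
    · intro j hj
      rw [hγ j (by omega), hγ (j + 1) (by omega)]
      exact div_le_div_of_nonneg_right (hstep j (by omega)) hZ2.le
    · intro j hMj hjm
      rw [hγ (j + 1) (by omega), hγ j (by omega)]
      refine div_le_div_of_nonneg_right ?_ hZ2.le
      set j' := m - j - 1 with hj'_def
      calc a (k + (j + 1)) * a (k + (m - (j + 1)))
          = a (k + (m - j')) * a (k + j') := by
            rw [show m - (j + 1) = j' by omega, show j + 1 = m - j' by omega]
        _ = a (k + j') * a (k + (m - j')) := mul_comm _ _
        _ ≤ a (k + (j' + 1)) * a (k + (m - (j' + 1))) := hstep j' (by omega)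
        _ = a (k + j) * a (k + (m - j)) := by
            rw [show m - (j' + 1) = j by omega, show j' + 1 = m - j by omega]
            exact mul_comm _ _
  · intro hcapu
    constructor
    · intro i h1 h2
      obtain ⟨I, ξ, hIcard, hk⟩ := exists_window n 2 (i - 1) (by omega) (by omega)
      have hm : n - I.card = 2 := by omega
      have hZform := condZ_eq μ I ξ a ha
      rw [hm, hk] at hZform
      have hZform' : condZ μ I ξ = a (i - 1) + 2 * a i + a (i + 1) := by
        rw [hZform]
        rw [Finset.sum_range_succ, Finset.sum_range_succ, Finset.sum_range_one]
        rw [show i - 1 + 1 = i by omega, show i - 1 + 2 = i + 1 by omega]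
        norm_num
      by_cases hZ : condZ μ I ξ = 0
      · have e0 : a (i - 1) = 0 := by
          have := hanonneg (i - 1); have := hanonneg i; have := hanonneg (i + 1)
          rw [hZ] at hZform'; linarith
        have e1 : a i = 0 := by
          have := hanonneg (i - 1); have := hanonneg i; have := hanonneg (i + 1)
          rw [hZ] at hZform'; linarith
        have e2 : a (i + 1) = 0 := by
          have := hanonneg (i - 1); have := hanonneg i; have := hanonneg (i + 1)
          rw [hZ] at hZform'; linarith
        simp [e0, e1, e2]
      · have hZpos : 0 < condZ μ I ξ :=
          lt_of_le_of_ne (condZ_nonneg μ hpos I ξ) (Ne.symm hZ)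
        obtain ⟨M, hM, hinc, hdec⟩ := hcapu I ξ hZpos
        rw [hm] at hM hdec
        have hγ : ∀ t, t ≤ 2 → condGamma μ I ξ t
            = a (i - 1 + t) * a (i - 1 + (2 - t)) / (condZ μ I ξ) ^ 2 := by
          intro t ht
          rw [condGamma_eq μ I ξ a ha t (by omega), hk, hm]
        have g0 : condGamma μ I ξ 0 = a (i - 1) * a (i + 1) / (condZ μ I ξ) ^ 2 := by
          rw [hγ 0 (by omega)]
          rw [show i - 1 + 0 = i - 1 by omega, show i - 1 + (2 - 0) = i + 1 by omega]
        have g1 : condGamma μ I ξ 1 = a i * a i / (condZ μ I ξ) ^ 2 := by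
          rw [hγ 1 (by omega), show i - 1 + 1 = i by omega]
        have g2 : condGamma μ I ξ 2 = a (i + 1) * a (i - 1) / (condZ μ I ξ) ^ 2 := by
          rw [hγ 2 (by omega)]
          rw [show i - 1 + 2 = i + 1 by omega, show i - 1 + (2 - 2) = i - 1 by omega]
        have key : condGamma μ I ξ 0 ≤ condGamma μ I ξ 1 := by
          rcases Nat.eq_zero_or_pos M with hM0 | hM1
          · have := hdec 1 (by omega) (by omega)
            rw [g2, g1] at this
            rw [g0, g1]
            calc a (i - 1) * a (i + 1) / (condZ μ I ξ) ^ 2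
                = a (i + 1) * a (i - 1) / (condZ μ I ξ) ^ 2 := by ring
              _ ≤ a i * a i / (condZ μ I ξ) ^ 2 := this
          · exact hinc 0 hM1
        rw [g0, g1] at key
        have hZ2 : (0:ℝ) < (condZ μ I ξ) ^ 2 := pow_pos hZpos 2
        have := (div_le_div_iff_of_pos_right hZ2).mp key
        calc a (i - 1) * a (i + 1) ≤ a i * a i := this
          _ = a i ^ 2 := (sq (a i)).symm
    · intro i j m hij hjm hmn hai ham
      by_contra haj
      rcases eq_or_lt_of_le hij with rfl | hij'
      · exact hai haj
      rcases eq_or_lt_of_le hjm with rfl | hjm'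
      · exact ham haj
      obtain ⟨I, ξ, hIcard, hk⟩ := exists_window n (m - i) i (by omega) (by omega)
      have hm' : n - I.card = m - i := by omega
      have hZform := condZ_eq μ I ξ a ha
      rw [hm', hk] at hZform
      have haipos : 0 < a i := lt_of_le_of_ne (hanonneg i) (Ne.symm hai)
      have hampos : 0 < a m := lt_of_le_of_ne (hanonneg m) (Ne.symm ham)
      have hZpos : 0 < condZ μ I ξ := by
        rw [hZform]
        have hmem : (0:ℕ) ∈ Finset.range (m - i + 1) := Finset.mem_range.mpr (by omega)
        have := Finset.single_le_sum
          (f := fun t => (((m - i).choose t : ℝ)) * a (i + t))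
          (fun t _ => mul_nonneg (by positivity) (hanonneg _)) hmem
        simp only [Nat.choose_zero_right, Nat.cast_one, one_mul, Nat.add_zero] at this
        linarith
      obtain ⟨M, hM, hinc, hdec⟩ := hcapu I ξ hZpos
      rw [hm'] at hM hdec
      have hZ2 : (0:ℝ) < (condZ μ I ξ) ^ 2 := pow_pos hZpos 2
      have hγ : ∀ t, t ≤ m - i → condGamma μ I ξ t
          = a (i + t) * a (i + (m - i - t)) / (condZ μ I ξ) ^ 2 := by
        intro t ht
        rw [condGamma_eq μ I ξ a ha t (by omega), hk, hm']
      have hγ0 : 0 < condGamma μ I ξ 0 := by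
        rw [hγ 0 (by omega), show i + 0 = i by omega, show i + (m - i - 0) = m by omega]
        positivity
      have hγL : 0 < condGamma μ I ξ (m - i) := by
        rw [hγ (m - i) (by omega), show i + (m - i) = m by omega,
          show i + (m - i - (m - i)) = i by omega]
        positivity
      have hγj : condGamma μ I ξ (j - i) = 0 := by
        rw [hγ (j - i) (by omega), show i + (j - i) = j by omega, haj]
        simp
      rcases le_or_gt (j - i) M with hle | hlt
      · have := mono_chain (condGamma μ I ξ) M hinc (j - i) hle
        rw [hγj] at this
        linarith
      · have := anti_chain (condGamma μ I ξ) M (m - i) hdec (j - i) (by omega) (by omega)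
        rw [hγj] at this
        linarith

theorem exchangeable_ULC_iff_CAPU {n : ℕ} (μ : (Fin n → Bool) → ℝ)
    (hpos : ∀ η, 0 ≤ μ η) (hsum : ∑ η : Fin n → Bool, μ η = 1)
    (hexch : ∀ η η' : Fin n → Bool, wt η = wt η' → μ η = μ η') :
    ((∀ i, 1 ≤ i → i ≤ n - 1 →
        (rankSeq μ (i - 1) / (n.choose (i - 1) : ℝ)) *
            (rankSeq μ (i + 1) / (n.choose (i + 1) : ℝ)) ≤
          (rankSeq μ i / (n.choose i : ℝ)) ^ 2) ∧
      (∀ i j m, i ≤ j → j ≤ m → m ≤ n →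
        rankSeq μ i ≠ 0 → rankSeq μ m ≠ 0 → rankSeq μ j ≠ 0)) ↔
    (∀ (I : Finset (Fin n)) (ξ : Fin n → Bool), 0 < condZ μ I ξ →
      UnimodalOn (condGamma μ I ξ) (n - I.card)) := by
  have hchoose : ∀ w, w ≤ n → ((n.choose w : ℝ)) ≠ 0 := fun w hw => by
    exact_mod_cast (Nat.choose_pos hw).ne'
  have hμa : ∀ η, μ η = rankSeq μ (wt η) / (n.choose (wt η) : ℝ) := by
    intro η
    have hsum' : rankSeq μ (wt η) = (n.choose (wt η) : ℝ) * μ η := by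
      rw [rankSeq, Finset.sum_congr rfl (fun η' hη' =>
        hexch η' η (by simpa using (Finset.mem_filter.mp hη').2)),
        Finset.sum_const, card_wt, nsmul_eq_mul]
    rw [hsum', mul_comm, mul_div_assoc, div_self (hchoose _ (wt_le η)), mul_one]
  have hrank_nonneg : ∀ w, 0 ≤ rankSeq μ w := fun w =>
    Finset.sum_nonneg fun η _ => hpos η
  have hanonneg : ∀ w, 0 ≤ rankSeq μ w / (n.choose w : ℝ) := fun w =>
    div_nonneg (hrank_nonneg w) (by positivity)
  have hne : ∀ w, w ≤ n →
      (rankSeq μ w / (n.choose w : ℝ) ≠ 0 ↔ rankSeq μ w ≠ 0) := by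
    intro w hw
    constructor
    · intro h hr; exact h (by rw [hr, zero_div])
    · intro h; exact div_ne_zero h (hchoose w hw)
  have key := main_core μ (fun w => rankSeq μ w / (n.choose w : ℝ)) hpos hμa hanonneg
  refine Iff.trans ?_ key
  constructor
  · rintro ⟨h1, h2⟩
    refine ⟨h1, fun i j m hij hjm hmn hi hm => ?_⟩
    exact (hne j (by omega)).mpr
      (h2 i j m hij hjm hmn ((hne i (by omega)).mp hi) ((hne m (by omega)).mp hm))
  · rintro ⟨h1, h2⟩
    refine ⟨h1, fun i j m hij hjm hmn hi hm => ?_⟩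
    exact (hne j (by omega)).mp
      (h2 i j m hij hjm hmn ((hne i (by omega)).mpr hi) ((hne m (by omega)).mpr hm))
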